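/- If X is a nonnegative absolutely continuous random variable with log-concave pdf f, then the past varentropy satisfies V(_tX) ≤ 1 for all t in the support. -/

import Mathlib

open Real MeasureTheory Set Filter Topology

/-- weight w -/
noncomputable def pvW (x : ℝ) : ℝ := (4*x - x^2 - 2) * Real.exp (-x)
/-- G' -/
noncomputable def pvG (x : ℝ) : ℝ := (2*x - x^2) * Real.exp (-x)

lemma pv_hasDerivAt_negG (s : ℝ) :
    HasDerivAt (fun r => -pvG r) (pvW s) s := by
  have h1 : HasDerivAt (fun r : ℝ => 2*r - r^2) (2 - 2*s) s := by
    simpa [Pi.sub_def] using ((hasDerivAt_id s).const_mul 2).sub (hasDerivAt_pow 2 s)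
  have h2 : HasDerivAt (fun r : ℝ => Real.exp (-r)) (-Real.exp (-s)) s := by
    simpa [Function.comp_def] using (Real.hasDerivAt_exp (-s)).comp s ((hasDerivAt_id s).neg)
  have := (h1.mul h2).neg
  exact this.congr_deriv (by unfold pvW; ring)

lemma pv_hasDerivAt_negH (s : ℝ) :
    HasDerivAt (fun r => -((r^3 - r^2) * Real.exp (-r))) (-(s * pvW s)) s := by
  have h1 : HasDerivAt (fun r : ℝ => r^3 - r^2) (3*s^2 - 2*s) s := by
    have := (hasDerivAt_pow 3 s).sub (hasDerivAt_pow 2 s)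
    simpa [Pi.sub_def] using this
  have h2 : HasDerivAt (fun r : ℝ => Real.exp (-r)) (-Real.exp (-s)) s := by
    simpa [Function.comp_def] using (Real.hasDerivAt_exp (-s)).comp s ((hasDerivAt_id s).neg)
  have := (h1.mul h2).neg
  exact this.congr_deriv (by unfold pvW; ring)

lemma pv_xexp_le (c x : ℝ) (hc : 0 < c) (hx : 0 ≤ x) : x * Real.exp (-(c*x)) ≤ 1/c := by
  have h : c*x ≤ Real.exp (c*x) := by
    have := Real.add_one_le_exp (c*x); linarith
  rw [Real.exp_neg]
  rw [mul_inv_le_iff₀ (Real.exp_pos _)]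
  rw [div_mul_eq_mul_div, le_div_iff₀ hc]
  linarith

lemma pv_abs_w_le (x : ℝ) (hx : 0 ≤ x) : |pvW x| ≤ 26 * Real.exp (-(2⁻¹*x)) := by
  have e1 : x * Real.exp (-(2⁻¹*x)) ≤ 2 := by
    have := pv_xexp_le 2⁻¹ x (by norm_num) hx; linarith
  have e2 : x^2 * Real.exp (-(2⁻¹*x)) ≤ 16 := by
    have h4 : x * Real.exp (-(4⁻¹*x)) ≤ 4 := by
      have := pv_xexp_le 4⁻¹ x (by norm_num) hx; linarith
    have : (x * Real.exp (-(4⁻¹*x)))^2 ≤ 4^2 := by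
      have hnn : 0 ≤ x * Real.exp (-(4⁻¹*x)) := by positivity
      exact pow_le_pow_left₀ hnn h4 2
    calc x^2 * Real.exp (-(2⁻¹*x)) = (x * Real.exp (-(4⁻¹*x)))^2 := by
          rw [mul_pow, ← Real.exp_nat_mul]; ring_nf
      _ ≤ 16 := by norm_num at this ⊢; linarith
  have hepos : (0:ℝ) < Real.exp (-(2⁻¹*x)) := Real.exp_pos _
  have habs : |pvW x| ≤ (x^2 + 4*x + 2) * Real.exp (-x) := by
    unfold pvW
    rw [abs_mul, abs_of_pos (Real.exp_pos _)]
    gcongr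
    have : |4*x - x^2 - 2| ≤ x^2 + 4*x + 2 := by
      rw [abs_le]; constructor <;> nlinarith
    exact this
  have hsplit : Real.exp (-x) = Real.exp (-(2⁻¹*x)) * Real.exp (-(2⁻¹*x)) := by
    rw [← Real.exp_add]; ring_nf
  calc |pvW x| ≤ (x^2 + 4*x + 2) * Real.exp (-x) := habs
    _ = (x^2 * Real.exp (-(2⁻¹*x)) + 4*(x*Real.exp (-(2⁻¹*x))) + 2*Real.exp (-(2⁻¹*x))) * Real.exp (-(2⁻¹*x)) := by
        rw [hsplit]; ring
    _ ≤ 26 * Real.exp (-(2⁻¹*x)) := by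
        have hle1 : Real.exp (-(2⁻¹*x)) ≤ 1 := by
          rw [Real.exp_le_one_iff]; nlinarith
        nlinarith [hepos.le]

lemma pv_abs_xw_le (x : ℝ) (hx : 0 ≤ x) : |x * pvW x| ≤ 300 * Real.exp (-(4⁻¹*x)) := by
  have e1 : x * Real.exp (-(4⁻¹*x)) ≤ 4 := by
    have := pv_xexp_le 4⁻¹ x (by norm_num) hx; linarith
  have habs : |x * pvW x| = x * |pvW x| := by
    rw [abs_mul, abs_of_nonneg hx]
  rw [habs]
  have h26 := pv_abs_w_le x hx
  have hsplit : Real.exp (-(2⁻¹*x)) = Real.exp (-(4⁻¹*x)) * Real.exp (-(4⁻¹*x)) := by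
    rw [← Real.exp_add]; ring_nf
  calc x * |pvW x| ≤ x * (26 * Real.exp (-(2⁻¹*x))) := by
        apply mul_le_mul_of_nonneg_left h26 hx
    _ = 26 * (x * Real.exp (-(4⁻¹*x))) * Real.exp (-(4⁻¹*x)) := by rw [hsplit]; ring
    _ ≤ 26 * 4 * Real.exp (-(4⁻¹*x)) := by
        have := (Real.exp_pos (-(4⁻¹*x))).le
        nlinarith
    _ ≤ 300 * Real.exp (-(4⁻¹*x)) := by
        have := (Real.exp_pos (-(4⁻¹*x))).le
        nlinarith

lemma pv_cont_w : Continuous pvW := by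
  unfold pvW; continuity

lemma pv_integrableOn_w (s : ℝ) (hs : 0 ≤ s) : IntegrableOn pvW (Ioi s) := by
  have hbig : IntegrableOn (fun x => 26 * Real.exp (-(2⁻¹*x))) (Ioi s) := by
    have := (exp_neg_integrableOn_Ioi s (by norm_num : (0:ℝ) < 2⁻¹)).const_mul (26:ℝ)
    simpa [neg_mul, IntegrableOn] using this
  apply hbig.integrable.mono' (pv_cont_w.aestronglyMeasurable.restrict)
  filter_upwards [ae_restrict_mem measurableSet_Ioi] with x hx
  exact (by simpa using pv_abs_w_le x (le_trans hs (le_of_lt hx)))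

lemma pv_integrableOn_xw : IntegrableOn (fun x => x * pvW x) (Ioi 0) := by
  have hbig : IntegrableOn (fun x => 300 * Real.exp (-(4⁻¹*x))) (Ioi 0) := by
    have := (exp_neg_integrableOn_Ioi 0 (by norm_num : (0:ℝ) < 4⁻¹)).const_mul (300:ℝ)
    simpa [neg_mul, IntegrableOn] using this
  apply hbig.integrable.mono' ((continuous_id.mul pv_cont_w).aestronglyMeasurable.restrict)
  filter_upwards [ae_restrict_mem measurableSet_Ioi] with x hx
  have := pv_abs_xw_le x (le_of_lt hx)
  calc ‖x * pvW x‖ = |x * pvW x| := by rw [Real.norm_eq_abs]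
    _ ≤ 300 * Real.exp (-(4⁻¹*x)) := this

lemma pv_tendsto_G : Tendsto (fun r => -pvG r) atTop (nhds 0) := by
  have h1 := tendsto_pow_mul_exp_neg_atTop_nhds_zero 1
  have h2 := tendsto_pow_mul_exp_neg_atTop_nhds_zero 2
  have : Tendsto (fun r : ℝ => -((2 * (r^1 * Real.exp (-r))) - r^2 * Real.exp (-r))) atTop (nhds (-(2*0 - 0))) :=
    ((h1.const_mul 2).sub h2).neg
  simp only [mul_zero, sub_zero, neg_zero] at this
  convert this using 2 with r
  unfold pvG; ring

lemma pv_tendsto_H : Tendsto (fun r : ℝ => -((r^3 - r^2) * Real.exp (-r))) atTop (nhds 0) := by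
  have h2 := tendsto_pow_mul_exp_neg_atTop_nhds_zero 2
  have h3 := tendsto_pow_mul_exp_neg_atTop_nhds_zero 3
  have : Tendsto (fun r : ℝ => -((r^3 * Real.exp (-r)) - r^2 * Real.exp (-r))) atTop (nhds (-(0 - 0))) :=
    (h3.sub h2).neg
  simp only [sub_zero, neg_zero] at this
  convert this using 2 with r
  ring

lemma pv_integral_w_Ioi (s : ℝ) (hs : 0 ≤ s) : ∫ ρ in Ioi s, pvW ρ = pvG s := by
  have := integral_Ioi_of_hasDerivAt_of_tendsto' (f := fun r => -pvG r) (f' := pvW)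
    (a := s) (fun x _ => pv_hasDerivAt_negG x) (pv_integrableOn_w s hs) pv_tendsto_G
  rw [this]; ring

lemma pv_integral_w_zero : ∫ ρ in Ioi (0:ℝ), pvW ρ = 0 := by
  rw [pv_integral_w_Ioi 0 le_rfl]; unfold pvG; norm_num

lemma pv_integral_xw_zero : ∫ ρ in Ioi (0:ℝ), ρ * pvW ρ = 0 := by
  have := integral_Ioi_of_hasDerivAt_of_tendsto' (f := fun r => -((r^3 - r^2) * Real.exp (-r)))
    (f' := fun s => -(s * pvW s)) (a := 0) (fun x _ => pv_hasDerivAt_negH x)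
    (pv_integrableOn_xw.neg) pv_tendsto_H
  rw [integral_neg] at this
  have h2 : ∫ ρ in Ioi (0:ℝ), ρ * pvW ρ = -(0 - -(((0:ℝ)^3 - 0^2) * Real.exp (-(0:ℝ)))) := by
    rw [← this]; ring
  rw [h2]; norm_num

lemma pv_chord_mid {l : ℝ → ℝ} (hl : ConcaveOn ℝ (Ioi 0) l) {p q ρ : ℝ}
    (hp : 0 < p) (hpq : p < q) (h1 : p ≤ ρ) (h2 : ρ ≤ q) :
    ((q - ρ) * l p + (ρ - p) * l q) / (q - p) ≤ l ρ := by
  have hd : 0 < q - p := by linarith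
  have ha : (0:ℝ) ≤ (q - ρ)/(q - p) := div_nonneg (by linarith) hd.le
  have hb : (0:ℝ) ≤ (ρ - p)/(q - p) := by
    apply div_nonneg (by linarith) hd.le
  have hab : (q - ρ)/(q - p) + (ρ - p)/(q - p) = 1 := by field_simp; ring
  have hcomb : ((q - ρ)/(q - p)) • p + ((ρ - p)/(q - p)) • q = ρ := by
    simp only [smul_eq_mul]; field_simp; ring
  have := hl.2 (mem_Ioi.2 hp) (mem_Ioi.2 (lt_trans hp hpq)) ha hb hab
  rw [hcomb] at this
  simpa only [smul_eq_mul, div_mul_eq_mul_div, ← add_div] using this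

lemma pv_chord_out_left {l : ℝ → ℝ} (hl : ConcaveOn ℝ (Ioi 0) l) {p q ρ : ℝ}
    (hρ : 0 < ρ) (h1 : ρ < p) (h2 : p < q) :
    l ρ ≤ ((q - ρ) * l p + (ρ - p) * l q) / (q - p) := by
  have hd : 0 < q - p := by linarith
  have hdq : 0 < q - ρ := by linarith
  have ha : (0:ℝ) ≤ (q - p)/(q - ρ) := div_nonneg hd.le hdq.le
  have hb : (0:ℝ) ≤ (p - ρ)/(q - ρ) := by
    apply div_nonneg (by linarith) hdq.le
  have hab : (q - p)/(q - ρ) + (p - ρ)/(q - ρ) = 1 := by field_simp; ring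
  have hcomb : ((q - p)/(q - ρ)) • ρ + ((p - ρ)/(q - ρ)) • q = p := by
    simp only [smul_eq_mul]; field_simp; ring
  have := hl.2 (mem_Ioi.2 hρ) (mem_Ioi.2 (by linarith : (0:ℝ) < q)) ha hb hab
  rw [hcomb] at this
  simp only [smul_eq_mul] at this
  rw [div_mul_eq_mul_div, div_mul_eq_mul_div, ← add_div, div_le_iff₀ hdq] at this
  rw [le_div_iff₀ hd]
  ring_nf at this ⊢
  linarith

lemma pv_chord_out_right {l : ℝ → ℝ} (hl : ConcaveOn ℝ (Ioi 0) l) {p q ρ : ℝ}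
    (hp : 0 < p) (h1 : p < q) (h2 : q < ρ) :
    l ρ ≤ ((q - ρ) * l p + (ρ - p) * l q) / (q - p) := by
  have hd : 0 < q - p := by linarith
  have hdρ : 0 < ρ - p := by linarith
  have ha : (0:ℝ) ≤ (ρ - q)/(ρ - p) := by
    apply div_nonneg (by linarith) hdρ.le
  have hb : (0:ℝ) ≤ (q - p)/(ρ - p) := div_nonneg hd.le hdρ.le
  have hab : (ρ - q)/(ρ - p) + (q - p)/(ρ - p) = 1 := by field_simp; ring
  have hcomb : ((ρ - q)/(ρ - p)) • p + ((q - p)/(ρ - p)) • ρ = q := by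
    simp only [smul_eq_mul]; field_simp; ring
  have := hl.2 (mem_Ioi.2 hp) (mem_Ioi.2 (by linarith : (0:ℝ) < ρ)) ha hb hab
  rw [hcomb] at this
  simp only [smul_eq_mul] at this
  rw [div_mul_eq_mul_div, div_mul_eq_mul_div, ← add_div, div_le_iff₀ hdρ] at this
  rw [le_div_iff₀ hd]
  ring_nf at this ⊢
  linarith

lemma pv_line_step {l : ℝ → ℝ} (t : ℝ) (hl : ConcaveOn ℝ (Ioi 0) l)
    (hl0 : ∀ ρ ∈ Ioi (0:ℝ), 0 ≤ l ρ) (hlt : ∀ ρ ∈ Ioi (0:ℝ), l ρ ≤ t)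
    (hmeas : AEStronglyMeasurable l (volume.restrict (Ioi 0))) :
    0 ≤ ∫ ρ in Ioi (0:ℝ), pvW ρ * l ρ := by
  set r₁ : ℝ := 2 - Real.sqrt 2 with hr1def
  set r₂ : ℝ := 2 + Real.sqrt 2 with hr2def
  have hsq : Real.sqrt 2 ^ 2 = 2 := Real.sq_sqrt (by norm_num)
  have hs0 : 0 < Real.sqrt 2 := Real.sqrt_pos.2 (by norm_num)
  have hs2 : Real.sqrt 2 < 2 := by nlinarith
  have hr₁ : 0 < r₁ := by simp only [hr1def]; linarith
  have hr₁₂ : r₁ < r₂ := by simp only [hr1def, hr2def]; linarith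
  have hdd : r₂ - r₁ = 2 * Real.sqrt 2 := by simp only [hr1def, hr2def]; ring
  set b : ℝ := (l r₂ - l r₁)/(r₂ - r₁) with hbdef
  set a : ℝ := l r₁ - b * r₁ with hadef
  have hline : ∀ ρ : ℝ, a + b*ρ = ((r₂ - ρ) * l r₁ + (ρ - r₁) * l r₂)/(r₂ - r₁) := by
    intro ρ
    have hne : r₂ - r₁ ≠ 0 := by linarith
    simp only [hadef, hbdef]
    field_simp
    ring
  have hsign_in : ∀ ρ : ℝ, r₁ ≤ ρ → ρ ≤ r₂ → 0 ≤ pvW ρ := by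
    intro ρ h1 h2
    have hq : 0 ≤ 4*ρ - ρ^2 - 2 := by
      simp only [hr1def] at h1
      simp only [hr2def] at h2
      nlinarith
    exact mul_nonneg hq (Real.exp_pos _).le
  have hsign_out : ∀ ρ : ℝ, (ρ ≤ r₁ ∨ r₂ ≤ ρ) → pvW ρ ≤ 0 := by
    intro ρ h
    have hq : 4*ρ - ρ^2 - 2 ≤ 0 := by
      rcases h with h | h
      · simp only [hr1def] at h; nlinarith
      · simp only [hr2def] at h; nlinarith
    exact mul_nonpos_of_nonpos_of_nonneg hq (Real.exp_pos _).le
  have hker : ∀ ρ ∈ Ioi (0:ℝ), pvW ρ * (a + b*ρ) ≤ pvW ρ * l ρ := by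
    intro ρ hρ
    rw [mem_Ioi] at hρ
    rcases lt_or_ge ρ r₁ with hc1 | hc1
    · have hle : l ρ ≤ a + b*ρ := by
        rw [hline]; exact pv_chord_out_left hl hρ hc1 hr₁₂
      exact mul_le_mul_of_nonpos_left hle (hsign_out ρ (Or.inl hc1.le))
    · rcases le_or_gt ρ r₂ with hc2 | hc2
      · have hge : a + b*ρ ≤ l ρ := by
          rw [hline]; exact pv_chord_mid hl hr₁ hr₁₂ hc1 hc2
        exact mul_le_mul_of_nonneg_left hge (hsign_in ρ hc1 hc2)
      · have hle : l ρ ≤ a + b*ρ := by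
          rw [hline]; exact pv_chord_out_right hl hr₁ hr₁₂ hc2
        exact mul_le_mul_of_nonpos_left hle (hsign_out ρ (Or.inr hc2.le))
  have hiw := pv_integrableOn_w 0 le_rfl
  have hiwl : IntegrableOn (fun ρ => pvW ρ * l ρ) (Ioi (0:ℝ)) := by
    apply (hiw.abs.const_mul t).mono'
      ((pv_cont_w.aestronglyMeasurable.restrict).mul hmeas)
    filter_upwards [ae_restrict_mem measurableSet_Ioi] with ρ hρ
    show ‖pvW ρ * l ρ‖ ≤ t * |pvW ρ|
    rw [norm_mul, Real.norm_eq_abs, Real.norm_eq_abs]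
    rw [abs_of_nonneg (hl0 ρ hρ)]
    calc |pvW ρ| * l ρ ≤ |pvW ρ| * t := by
          apply mul_le_mul_of_nonneg_left (hlt ρ hρ) (abs_nonneg _)
      _ = t * |pvW ρ| := by ring
  have heq : (fun ρ => pvW ρ * (a + b*ρ)) = (fun ρ => a * pvW ρ + b * (ρ * pvW ρ)) := by
    funext ρ; ring
  have hiline : IntegrableOn (fun ρ => pvW ρ * (a + b*ρ)) (Ioi (0:ℝ)) := by
    rw [heq]
    exact ((hiw.const_mul a).add (pv_integrableOn_xw.const_mul b))
  have hzero : ∫ ρ in Ioi (0:ℝ), pvW ρ * (a + b*ρ) = 0 := by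
    rw [heq]
    rw [integral_add ((hiw.const_mul a)) (pv_integrableOn_xw.const_mul b)]
    rw [MeasureTheory.integral_const_mul, MeasureTheory.integral_const_mul,
      pv_integral_w_zero, pv_integral_xw_zero]
    ring
  calc (0:ℝ) = ∫ ρ in Ioi (0:ℝ), pvW ρ * (a + b*ρ) := hzero.symm
    _ ≤ ∫ ρ in Ioi (0:ℝ), pvW ρ * l ρ :=
        setIntegral_mono_on hiline hiwl measurableSet_Ioi hker

lemma pv_le_of_eps {a b : ℝ} (h : ∀ ε, 0 < ε → a ≤ b + ε) : a ≤ b := by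
  by_contra hc
  push_neg at hc
  have := h ((a - b)/2) (by linarith)
  linarith

lemma pv_I_nonneg (t : ℝ) (ht : 0 < t) (v : ℝ → ℝ)
    (hconv : ConvexOn ℝ (Ioo 0 t) v) (hv0 : ∀ x ∈ Ioo 0 t, 0 ≤ v x)
    (hinf : ∀ r, 0 < r → ∃ x ∈ Ioo 0 t, v x < r) :
    0 ≤ ∫ x in Ioo 0 t, pvG (v x) := by
  have hcont : ContinuousOn v (Ioo 0 t) := hconv.continuousOn isOpen_Ioo
  set A : ℝ → Set ℝ := fun ρ => Ioo 0 t ∩ v ⁻¹' (Iio ρ) with hAdef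
  have hAopen : ∀ ρ, IsOpen (A ρ) := fun ρ =>
    hcont.isOpen_inter_preimage isOpen_Ioo isOpen_Iio
  have hAsub : ∀ ρ, A ρ ⊆ Ioo 0 t := fun ρ => inter_subset_left
  have hAconv : ∀ ρ, Convex ℝ (A ρ) := by
    intro ρ
    have h := hconv.convex_lt ρ
    have he : A ρ = {x ∈ Ioo 0 t | v x < ρ} := by
      ext x
      simp only [hAdef, mem_inter_iff, mem_preimage, mem_Iio, mem_setOf_eq]
    rw [he]
    exact h
  have hAne : ∀ ρ, 0 < ρ → (A ρ).Nonempty := by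
    intro ρ hρ
    obtain ⟨x, hx, hvx⟩ := hinf ρ hρ
    exact ⟨x, hx, by simpa using hvx⟩
  have hAbddA : ∀ ρ, BddAbove (A ρ) := fun ρ => BddAbove.mono (hAsub ρ) bddAbove_Ioo
  have hAbddB : ∀ ρ, BddBelow (A ρ) := fun ρ => BddBelow.mono (hAsub ρ) bddBelow_Ioo
  set β : ℝ → ℝ := fun ρ => sSup (A ρ) with hβdef
  set α : ℝ → ℝ := fun ρ => sInf (A ρ) with hαdef
  have hβle : ∀ ρ, 0 < ρ → β ρ ≤ t := fun ρ hρ =>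
    csSup_le (hAne ρ hρ) (fun x hx => (hx.1.2).le)
  have hαge : ∀ ρ, 0 < ρ → 0 ≤ α ρ := fun ρ hρ =>
    le_csInf (hAne ρ hρ) (fun x hx => (hx.1.1).le)
  have hαβ : ∀ ρ, 0 < ρ → α ρ ≤ β ρ := fun ρ hρ =>
    csInf_le_csSup (hAne ρ hρ) (hAbddB ρ) (hAbddA ρ)
  have hvol : ∀ ρ, 0 < ρ → volume (A ρ) = ENNReal.ofReal (β ρ - α ρ) := by
    intro ρ hρ
    have h1 : Ioo (α ρ) (β ρ) ⊆ A ρ := by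
      intro x hx
      obtain ⟨a, ha, hax⟩ := exists_lt_of_csInf_lt (hAne ρ hρ) hx.1
      obtain ⟨b, hb, hxb⟩ := exists_lt_of_lt_csSup (hAne ρ hρ) hx.2
      exact ((hAconv ρ).ordConnected).out ha hb ⟨hax.le, hxb.le⟩
    have h2 : A ρ ⊆ Icc (α ρ) (β ρ) := fun x hx =>
      ⟨csInf_le (hAbddB ρ) hx, le_csSup (hAbddA ρ) hx⟩
    apply le_antisymm
    · calc volume (A ρ) ≤ volume (Icc (α ρ) (β ρ)) := measure_mono h2
        _ = ENNReal.ofReal (β ρ - α ρ) := Real.volume_Icc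
    · calc ENNReal.ofReal (β ρ - α ρ) = volume (Ioo (α ρ) (β ρ)) := Real.volume_Ioo.symm
        _ ≤ volume (A ρ) := measure_mono h1
  -- concavity of β
  have hβconc : ConcaveOn ℝ (Ioi 0) β := by
    refine ⟨convex_Ioi 0, ?_⟩
    intro ρ₁ h1 ρ₂ h2 a b ha hb hab
    rw [mem_Ioi] at h1 h2
    rcases eq_or_lt_of_le ha with rfl | ha'
    · rw [zero_add] at hab; subst hab; simp
    rcases eq_or_lt_of_le hb with rfl | hb'
    · rw [add_zero] at hab; subst hab; simp
    apply pv_le_of_eps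
    intro ε hε
    obtain ⟨x₁, hx₁, hx₁'⟩ := exists_lt_of_lt_csSup (hAne ρ₁ h1)
      (show β ρ₁ - ε < β ρ₁ by linarith)
    obtain ⟨x₂, hx₂, hx₂'⟩ := exists_lt_of_lt_csSup (hAne ρ₂ h2)
      (show β ρ₂ - ε < β ρ₂ by linarith)
    have hv₁ : v x₁ < ρ₁ := by simpa using hx₁.2
    have hv₂ : v x₂ < ρ₂ := by simpa using hx₂.2
    have hz : a • x₁ + b • x₂ ∈ A (a • ρ₁ + b • ρ₂) := by
      constructor
      · exact (convex_Ioo 0 t) hx₁.1 hx₂.1 ha hb hab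
      · simp only [mem_preimage, mem_Iio, smul_eq_mul]
        have hvc := hconv.2 hx₁.1 hx₂.1 ha hb hab
        simp only [smul_eq_mul] at hvc
        have : a * v x₁ + b * v x₂ < a * ρ₁ + b * ρ₂ :=
          add_lt_add (mul_lt_mul_of_pos_left hv₁ ha') (mul_lt_mul_of_pos_left hv₂ hb')
        calc v (a * x₁ + b * x₂) ≤ a * v x₁ + b * v x₂ := hvc
          _ < a * ρ₁ + b * ρ₂ := this
    have hle := le_csSup (hAbddA (a • ρ₁ + b • ρ₂)) hz
    simp only [smul_eq_mul] at hle ⊢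
    nlinarith [hle]
  -- convexity of α
  have hαconv : ConvexOn ℝ (Ioi 0) α := by
    refine ⟨convex_Ioi 0, ?_⟩
    intro ρ₁ h1 ρ₂ h2 a b ha hb hab
    rw [mem_Ioi] at h1 h2
    rcases eq_or_lt_of_le ha with rfl | ha'
    · rw [zero_add] at hab; subst hab; simp
    rcases eq_or_lt_of_le hb with rfl | hb'
    · rw [add_zero] at hab; subst hab; simp
    apply pv_le_of_eps
    intro ε hε
    obtain ⟨x₁, hx₁, hx₁'⟩ := exists_lt_of_csInf_lt (hAne ρ₁ h1)
      (show α ρ₁ < α ρ₁ + ε by linarith)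
    obtain ⟨x₂, hx₂, hx₂'⟩ := exists_lt_of_csInf_lt (hAne ρ₂ h2)
      (show α ρ₂ < α ρ₂ + ε by linarith)
    have hv₁ : v x₁ < ρ₁ := by simpa using hx₁.2
    have hv₂ : v x₂ < ρ₂ := by simpa using hx₂.2
    have hz : a • x₁ + b • x₂ ∈ A (a • ρ₁ + b • ρ₂) := by
      constructor
      · exact (convex_Ioo 0 t) hx₁.1 hx₂.1 ha hb hab
      · simp only [mem_preimage, mem_Iio, smul_eq_mul]
        have hvc := hconv.2 hx₁.1 hx₂.1 ha hb hab
        simp only [smul_eq_mul] at hvc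
        have : a * v x₁ + b * v x₂ < a * ρ₁ + b * ρ₂ :=
          add_lt_add (mul_lt_mul_of_pos_left hv₁ ha') (mul_lt_mul_of_pos_left hv₂ hb')
        calc v (a * x₁ + b * x₂) ≤ a * v x₁ + b * v x₂ := hvc
          _ < a * ρ₁ + b * ρ₂ := this
    have hle := csInf_le (hAbddB (a • ρ₁ + b • ρ₂)) hz
    simp only [smul_eq_mul] at hle ⊢
    nlinarith [hle]
  set l : ℝ → ℝ := fun ρ => β ρ - α ρ with hldef
  have hlconc : ConcaveOn ℝ (Ioi 0) l := by
    have := hβconc.sub hαconv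
    exact this
  have hl0 : ∀ ρ ∈ Ioi (0:ℝ), 0 ≤ l ρ := by
    intro ρ hρ; rw [mem_Ioi] at hρ
    simp only [hldef]; linarith [hαβ ρ hρ]
  have hlt : ∀ ρ ∈ Ioi (0:ℝ), l ρ ≤ t := by
    intro ρ hρ; rw [mem_Ioi] at hρ
    simp only [hldef]; linarith [hβle ρ hρ, hαge ρ hρ]
  have hlcont : ContinuousOn l (Ioi 0) := hlconc.continuousOn isOpen_Ioi
  have hlmeas : AEStronglyMeasurable l (volume.restrict (Ioi 0)) :=
    hlcont.aestronglyMeasurable measurableSet_Ioi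
  -- Fubini
  set S : Set (ℝ × ℝ) := ⋃ (q : ℚ), ((Ioo 0 t ∩ v ⁻¹' (Iio (q:ℝ))) ×ˢ Ioi (q:ℝ)) with hSdef
  have hSmeas : MeasurableSet S := by
    apply MeasurableSet.iUnion
    intro q
    exact ((hcont.isOpen_inter_preimage isOpen_Ioo isOpen_Iio).measurableSet).prod
      measurableSet_Ioi
  have hSmem : ∀ x ∈ Ioo 0 t, ∀ ρ : ℝ, ((x, ρ) ∈ S ↔ v x < ρ) := by
    intro x hx ρ
    simp only [hSdef, mem_iUnion, mem_prod, mem_inter_iff, mem_preimage, mem_Iio, mem_Ioi]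
    constructor
    · rintro ⟨q, ⟨⟨_, hq1⟩, hq2⟩⟩
      exact lt_trans hq1 hq2
    · intro h
      obtain ⟨q, hq1, hq2⟩ := exists_rat_btwn h
      exact ⟨q, ⟨⟨hx, hq1⟩, hq2⟩⟩
  have hS_sub : ∀ x ρ, (x, ρ) ∈ S → x ∈ A ρ := by
    intro x ρ hmem
    simp only [hSdef, mem_iUnion, mem_prod, mem_inter_iff, mem_preimage, mem_Iio,
      mem_Ioi] at hmem
    obtain ⟨q, ⟨⟨hxI, hq1⟩, hq2⟩⟩ := hmem
    exact ⟨hxI, by simp only [mem_preimage, mem_Iio]; linarith⟩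
  set F : ℝ × ℝ → ℝ := S.indicator (fun p => pvW p.2) with hFdef
  have hFmeas : Measurable F := (pv_cont_w.measurable.comp measurable_snd).indicator hSmeas
  set μ := volume.restrict (Ioo 0 t) with hμdef
  set ν := volume.restrict (Ioi (0:ℝ)) with hνdef
  have hiw := pv_integrableOn_w 0 le_rfl
  have hsec : ∀ x : ℝ, Integrable (fun ρ => F (x, ρ)) ν := by
    intro x
    apply hiw.abs.mono' ((hFmeas.comp measurable_prodMk_left).aestronglyMeasurable)
    filter_upwards with ρ
    show ‖F (x, ρ)‖ ≤ |pvW ρ|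
    rw [hFdef]
    calc ‖S.indicator (fun p : ℝ × ℝ => pvW p.2) (x, ρ)‖
        ≤ ‖pvW (x, ρ).2‖ := norm_indicator_le_norm_self _ _
      _ = |pvW ρ| := Real.norm_eq_abs _
  have hFint : Integrable F (μ.prod ν) := by
    refine (integrable_prod_iff hFmeas.aestronglyMeasurable).2 ⟨?_, ?_⟩
    · filter_upwards with x
      exact hsec x
    · have hbound : ∀ x : ℝ, (∫ ρ, ‖F (x, ρ)‖ ∂ν) ≤ ∫ ρ in Ioi (0:ℝ), |pvW ρ| := by
        intro x
        apply integral_mono (hsec x).norm hiw.abs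
        intro ρ
        show ‖F (x, ρ)‖ ≤ |pvW ρ|
        rw [hFdef]
        calc ‖S.indicator (fun p : ℝ × ℝ => pvW p.2) (x, ρ)‖
            ≤ ‖pvW (x, ρ).2‖ := norm_indicator_le_norm_self _ _
          _ = |pvW ρ| := Real.norm_eq_abs _
      apply Integrable.mono' (g := fun _ : ℝ => ∫ ρ in Ioi (0:ℝ), |pvW ρ|)
      · rw [hμdef]
        exact integrableOn_const (by rw [Real.volume_Ioo]; exact ENNReal.ofReal_ne_top)
      · exact hFmeas.aestronglyMeasurable.norm.integral_prod_right'
      · filter_upwards with x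
        rw [Real.norm_of_nonneg (integral_nonneg (fun ρ => norm_nonneg _))]
        exact hbound x
  have hswap : (∫ x, (∫ ρ, F (x, ρ) ∂ν) ∂μ) = ∫ ρ, (∫ x, F (x, ρ) ∂μ) ∂ν := by
    apply integral_integral_swap
    exact hFint
  have hLHS : (∫ x, (∫ ρ, F (x, ρ) ∂ν) ∂μ) = ∫ x in Ioo 0 t, pvG (v x) := by
    apply integral_congr_ae
    filter_upwards [ae_restrict_mem measurableSet_Ioo] with x hx
    have hsecx : (fun ρ => F (x, ρ)) = (Ioi (v x)).indicator pvW := by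
      funext ρ
      by_cases h : v x < ρ
      · rw [hFdef, indicator_of_mem ((hSmem x hx ρ).2 h), indicator_of_mem (mem_Ioi.2 h)]
      · rw [hFdef, indicator_of_notMem (fun hc => h ((hSmem x hx ρ).1 hc)),
          indicator_of_notMem (by simpa using h)]
    rw [hsecx, hνdef, integral_indicator measurableSet_Ioi,
      Measure.restrict_restrict measurableSet_Ioi, Ioi_inter_Ioi, max_eq_left (hv0 x hx)]
    exact pv_integral_w_Ioi (v x) (hv0 x hx)
  have hRHS : (∫ ρ, (∫ x, F (x, ρ) ∂μ) ∂ν) = ∫ ρ in Ioi (0:ℝ), pvW ρ * l ρ := by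
    apply integral_congr_ae
    filter_upwards [ae_restrict_mem measurableSet_Ioi] with ρ hρ
    rw [mem_Ioi] at hρ
    have hsecρ : (fun x => F (x, ρ)) = (A ρ).indicator (fun _ => pvW ρ) := by
      funext x
      by_cases h : x ∈ A ρ
      · have hx : x ∈ Ioo 0 t := (hAsub ρ) h
        have hv : v x < ρ := by simpa using h.2
        rw [hFdef, indicator_of_mem ((hSmem x hx ρ).2 hv), indicator_of_mem h]
      · rw [hFdef, indicator_of_notMem (fun hc => h (hS_sub x ρ hc)), indicator_of_notMem h]
    rw [hsecρ, integral_indicator (hAopen ρ).measurableSet, setIntegral_const, hμdef,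
      measureReal_restrict_apply (hAopen ρ).measurableSet,
      inter_eq_self_of_subset_left (hAsub ρ), measureReal_def, hvol ρ hρ,
      ENNReal.toReal_ofReal (sub_nonneg.2 (hαβ ρ hρ))]
    simp only [smul_eq_mul, hldef]
    ring
  have hchain : ∫ x in Ioo 0 t, pvG (v x) = ∫ ρ in Ioi (0:ℝ), pvW ρ * l ρ := by
    rw [← hLHS, ← hRHS, hswap]
  rw [hchain]
  exact pv_line_step t hlconc hl0 hlt hlmeas

/-- If `X` is a nonnegative absolutely continuous random variable with
log-concave pdf `f`, then the past varentropy satisfies `V(_tX) ≤ 1`. -/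
theorem past_varentropy_le_one_of_logConcave (f : ℝ → ℝ) (t Ft : ℝ) (ht : 0 < t)
    (hfnn : ∀ x, 0 ≤ f x) (hf0 : ∀ x ≤ (0:ℝ), f x = 0)
    (hpdf : (∫ x in Set.Ioi (0:ℝ), f x) = 1)
    (hconc : ConcaveOn ℝ (Set.Ioi 0) (fun x => Real.log (f x)))
    (hFt : Ft = ∫ x in (0:ℝ)..t, f x) (hFpos : 0 < Ft) :
    (∫ x in (0:ℝ)..t, f x / Ft * (Real.log (f x / Ft))^2)
      - (∫ x in (0:ℝ)..t, f x / Ft * Real.log (f x / Ft))^2 ≤ 1 := by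
  classical
  -- f is interval integrable
  have hII : IntervalIntegrable f volume 0 t := by
    by_contra hno
    rw [intervalIntegral.integral_undef hno] at hFt
    exact absurd hFt (by linarith)
  have hfint : IntegrableOn f (Ioc 0 t) :=
    (intervalIntegrable_iff_integrableOn_Ioc_of_le ht.le).1 hII
  set u : ℝ → ℝ := fun x => Real.log (f x) with hudef
  set L : ℝ := Real.log Ft with hLdef
  have hne : (Ioo (0:ℝ) t).Nonempty := ⟨t/2, by constructor <;> linarith⟩
  have himg : (u '' Ioo 0 t).Nonempty := hne.image u
  -- u is bounded above on Ioo 0 t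
  have hBdd : BddAbove (u '' Ioo 0 t) := by
    refine ⟨2*|u t| + |u (2*t)|, ?_⟩
    rintro y ⟨x, hx, rfl⟩
    set lam : ℝ := t/(2*t - x) with hlamdef
    have hx2t : 0 < 2*t - x := by have := hx.2; linarith
    have hlam1 : lam ≤ 1 := by
      rw [hlamdef, div_le_one hx2t]; have h1 := hx.1; have h2 := hx.2; linarith
    have hlam2 : 1/2 ≤ lam := by
      rw [hlamdef, le_div_iff₀ hx2t]; have h1 := hx.1; have h2 := hx.2; linarith
    have hlam0 : 0 ≤ lam := by linarith
    have hcomb : lam • x + (1 - lam) • (2*t) = t := by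
      simp only [smul_eq_mul, hlamdef]
      have := hx2t.ne'
      rw [div_mul_eq_mul_div, one_sub_div this, div_mul_eq_mul_div, ← add_div, div_eq_iff this]
      ring
    have hcc := hconc.2 (mem_Ioi.2 hx.1) (mem_Ioi.2 (by linarith : (0:ℝ) < 2*t))
      hlam0 (by linarith : (0:ℝ) ≤ 1 - lam) (by ring)
    rw [hcomb] at hcc
    simp only [smul_eq_mul] at hcc
    -- hcc : lam * u x + (1 - lam) * u (2*t) ≤ u t
    rcases le_or_gt (u x) 0 with hux | hux
    · have h1 : (0:ℝ) ≤ |u t| := abs_nonneg _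
      have h2 : (0:ℝ) ≤ |u (2*t)| := abs_nonneg _
      linarith
    · have hb1 : (1 - lam) * u (2*t) ≥ -((1/2) * |u (2*t)|) := by
        have hna : -(|u (2*t)|) ≤ u (2*t) := neg_abs_le _
        nlinarith [abs_nonneg (u (2*t))]
      have hb2 : u t ≤ |u t| := le_abs_self _
      have hb3 : lam * u x ≥ (1/2) * u x := by nlinarith
      nlinarith [abs_nonneg (u t), abs_nonneg (u (2*t))]
  set M : ℝ := sSup (u '' Ioo 0 t) with hMdef
  have huleM : ∀ x ∈ Ioo 0 t, u x ≤ M := fun x hx => le_csSup hBdd ⟨x, hx, rfl⟩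
  set v : ℝ → ℝ := fun x => M - u x with hvdef
  have hconcu : ConcaveOn ℝ (Ioo 0 t) u :=
    hconc.subset Ioo_subset_Ioi_self (convex_Ioo 0 t)
  have hvconv : ConvexOn ℝ (Ioo 0 t) v := by
    refine ⟨convex_Ioo 0 t, ?_⟩
    intro x hx y hy a b ha hb hab
    have hcu := hconcu.2 hx hy ha hb hab
    simp only [smul_eq_mul, hvdef] at hcu ⊢
    have hM : a*M + b*M = M := by
      calc a*M + b*M = (a+b)*M := by ring
        _ = M := by rw [hab, one_mul]
    linarith
  have hv0 : ∀ x ∈ Ioo 0 t, 0 ≤ v x := by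
    intro x hx; simp only [hvdef]; linarith [huleM x hx]
  have hinfv : ∀ r, 0 < r → ∃ x ∈ Ioo 0 t, v x < r := by
    intro r hr
    obtain ⟨y, hy, hy'⟩ := exists_lt_of_lt_csSup himg (show M - r < M by linarith)
    obtain ⟨x, hx, rfl⟩ := hy
    exact ⟨x, hx, by simp only [hvdef]; linarith⟩
  have hI := pv_I_nonneg t ht v hvconv hv0 hinfv
  set p : ℝ → ℝ := fun x => f x / Ft with hpdef
  set c : ℝ := M - L - 1 with hcdef
  -- pointwise identity at points where f > 0
  have hpt : ∀ x ∈ Ioo 0 t, 0 < f x →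
      p x * ((Real.log (p x) - c)^2 - 1) = -(Real.exp (M - L)) * pvG (v x) := by
    intro x hx hf
    have hlogp : Real.log (p x) = u x - L := by
      simp only [hpdef, hudef, hLdef]
      exact Real.log_div hf.ne' hFpos.ne'
    have hp : p x = Real.exp (u x - L) := by
      simp only [hpdef, hudef, hLdef]
      rw [Real.exp_sub, Real.exp_log hf, Real.exp_log hFpos]
    rw [hlogp, hp]
    simp only [pvG, hvdef, hcdef]
    rw [show -(M - u x) = u x - M by ring,
      show Real.exp (u x - L) = Real.exp (M - L) * Real.exp (u x - M) by
        rw [← Real.exp_add]; ring_nf]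
    ring
  -- a.e. identity on Ioo 0 t
  have hEid : ∀ᵐ x ∂(volume.restrict (Ioo 0 t)),
      p x * ((Real.log (p x) - c)^2 - 1) = -(Real.exp (M - L)) * pvG (v x) := by
    by_cases hcase : ∃ x₀ ∈ Ioo 0 t, 0 < u x₀
    · obtain ⟨x₀, hx₀, hux₀⟩ := hcase
      have hfx₀ : f x₀ ≠ 0 := by
        intro h0
        rw [hudef] at hux₀
        simp only [h0, Real.log_zero] at hux₀
        exact lt_irrefl 0 hux₀
      set Z : Set ℝ := {x ∈ Ioo 0 t | f x = 0} with hZdef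
      have hZu : ∀ x ∈ Z, u x = 0 := by
        intro x hxZ
        simp only [hudef, hxZ.2, Real.log_zero]
      have hside : ∀ y z : ℝ, y ∈ Z → z ∈ Z → y < z → z < x₀ → False := by
        intro y z hy hz hyz hzx
        set a : ℝ := (x₀ - z)/(x₀ - y) with hadef
        set b : ℝ := (z - y)/(x₀ - y) with hbdef
        have hd : 0 < x₀ - y := by linarith
        have ha : 0 < a := div_pos (by linarith) hd
        have hb : 0 < b := div_pos (by linarith) hd
        have hab : a + b = 1 := by rw [hadef, hbdef]; field_simp; ring
        have hcomb : a • y + b • x₀ = z := by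
          simp only [smul_eq_mul, hadef, hbdef]; field_simp; ring
        have := hconcu.2 hy.1 hx₀ ha.le hb.le hab
        rw [hcomb] at this
        simp only [smul_eq_mul] at this
        rw [hZu y hy, hZu z hz] at this
        nlinarith
      have hside' : ∀ y z : ℝ, y ∈ Z → z ∈ Z → x₀ < y → y < z → False := by
        intro y z hy hz hxy hyz
        set a : ℝ := (z - y)/(z - x₀) with hadef
        set b : ℝ := (y - x₀)/(z - x₀) with hbdef
        have hd : 0 < z - x₀ := by linarith
        have ha : 0 < a := div_pos (by linarith) hd
        have hb : 0 < b := div_pos (by linarith) hd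
        have hab : a + b = 1 := by rw [hadef, hbdef]; field_simp; ring
        have hcomb : a • x₀ + b • z = y := by
          simp only [smul_eq_mul, hadef, hbdef]; field_simp; ring
        have := hconcu.2 hx₀ hz.1 ha.le hb.le hab
        rw [hcomb] at this
        simp only [smul_eq_mul] at this
        rw [hZu y hy, hZu z hz] at this
        nlinarith
      have hZsub1 : Set.Subsingleton {x ∈ Z | x < x₀} := by
        intro y hy z hz
        by_contra hne
        rcases lt_or_gt_of_ne hne with h | h
        · exact hside y z hy.1 hz.1 h hz.2
        · exact hside z y hz.1 hy.1 h hy.2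
      have hZsub2 : Set.Subsingleton {x ∈ Z | x₀ < x} := by
        intro y hy z hz
        by_contra hne
        rcases lt_or_gt_of_ne hne with h | h
        · exact hside' y z hy.1 hz.1 hy.2 h
        · exact hside' z y hz.1 hy.1 hz.2 h
      have hZnull : volume Z = 0 := by
        have hcover : Z ⊆ {x ∈ Z | x < x₀} ∪ {x ∈ Z | x₀ < x} := by
          intro x hxZ
          rcases lt_trichotomy x x₀ with h | h | h
          · exact Or.inl ⟨hxZ, h⟩
          · exact absurd (h ▸ hxZ.2) hfx₀
          · exact Or.inr ⟨hxZ, h⟩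
        apply measure_mono_null hcover
        exact measure_union_null (hZsub1.measure_zero _) (hZsub2.measure_zero _)
      have hZae : ∀ᵐ x ∂(volume.restrict (Ioo 0 t)), x ∉ Z := by
        rw [MeasureTheory.ae_iff]
        apply measure_mono_null (fun x hx => by simpa using hx : {x | ¬ x ∉ Z} ⊆ Z)
        exact le_antisymm (le_trans (Measure.restrict_le_self _) hZnull.le) zero_le
      filter_upwards [ae_restrict_mem measurableSet_Ioo, hZae] with x hx hxZ
      have hfx : 0 < f x := by
        rcases (hfnn x).lt_or_eq with h | h
        · exact h
        · exact absurd ⟨hx, h.symm⟩ hxZ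
      exact hpt x hx hfx
    · push_neg at hcase
      filter_upwards [ae_restrict_mem measurableSet_Ioo] with x hx
      rcases (hfnn x).lt_or_eq with hfx | hfx
      · exact hpt x hx hfx
      · have hux : u x = 0 := by simp only [hudef, ← hfx, Real.log_zero]
        have hM0 : M = 0 := le_antisymm
          (csSup_le himg (by rintro y ⟨z, hz, rfl⟩; exact hcase z hz))
          (hux ▸ huleM x hx)
        have hpx : p x = 0 := by simp only [hpdef, ← hfx, zero_div]
        have hvx : v x = 0 := by simp only [hvdef, hM0, hux, sub_zero]
        rw [hpx, hvx]
        simp [pvG]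
  have hEeq : ∫ x in Ioo 0 t, p x * ((Real.log (p x) - c)^2 - 1)
      = -(Real.exp (M - L)) * ∫ x in Ioo 0 t, pvG (v x) := by
    rw [integral_congr_ae hEid, MeasureTheory.integral_const_mul]
  have hE : ∫ x in Ioo 0 t, p x * ((Real.log (p x) - c)^2 - 1) ≤ 0 := by
    rw [hEeq]
    have := mul_nonneg (Real.exp_pos (M - L)).le hI
    linarith
  -- integrability of the pieces
  have hfIoo : IntegrableOn f (Ioo 0 t) := hfint.mono_set Ioo_subset_Ioc_self
  have hp_int : IntegrableOn p (Ioo 0 t) := hfIoo.div_const Ft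
  have hpmeas : AEStronglyMeasurable p (volume.restrict (Ioo 0 t)) :=
    hp_int.aestronglyMeasurable
  set C : ℝ := Real.exp M / Ft with hCdef
  have hpC : ∀ x ∈ Ioo 0 t, p x ∈ Icc (0:ℝ) C := by
    intro x hx
    constructor
    · exact div_nonneg (hfnn x) hFpos.le
    · have hfle : f x ≤ Real.exp M := by
        rcases (hfnn x).lt_or_eq with h | h
        · have hub : u x ≤ M := huleM x hx
          calc f x = Real.exp (u x) := by rw [hudef, Real.exp_log h]
            _ ≤ Real.exp M := Real.exp_le_exp.2 hub
        · rw [← h]; positivity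
      simp only [hpdef, hCdef]
      gcongr
  -- integrability of p * log p and p * (log p)^2
  have hΦ1cont : Continuous (fun y : ℝ => y * Real.log y) := Real.continuous_mul_log
  have hΦ2cont : Continuous (fun y : ℝ => (2*(Real.sqrt y * Real.log (Real.sqrt y)))^2) :=
    (continuous_const.mul (Real.continuous_mul_log.comp Real.continuous_sqrt)).pow 2
  have hΦ2eq : ∀ y : ℝ, 0 ≤ y →
      (2*(Real.sqrt y * Real.log (Real.sqrt y)))^2 = y * (Real.log y)^2 := by
    intro y hy
    rcases hy.lt_or_eq with h | h
    · rw [Real.log_sqrt hy, mul_pow, mul_pow, Real.sq_sqrt hy]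
      ring
    · rw [← h]; simp
  obtain ⟨D₁, hD₁⟩ :=
    (isCompact_Icc (a := (0:ℝ)) (b := C)).exists_bound_of_continuousOn hΦ1cont.continuousOn
  obtain ⟨D₂, hD₂⟩ :=
    (isCompact_Icc (a := (0:ℝ)) (b := C)).exists_bound_of_continuousOn hΦ2cont.continuousOn
  have hIooFin : volume (Ioo (0:ℝ) t) < ⊤ := by
    rw [Real.volume_Ioo]; exact ENNReal.ofReal_lt_top
  have h1_int : IntegrableOn (fun x => p x * Real.log (p x)) (Ioo 0 t) := by
    apply Integrable.mono' (g := fun _ => D₁) (integrableOn_const hIooFin.ne)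
      (hΦ1cont.comp_aestronglyMeasurable hpmeas)
    filter_upwards [ae_restrict_mem measurableSet_Ioo] with x hx
    exact hD₁ _ (hpC x hx)
  have h2_int : IntegrableOn (fun x => p x * (Real.log (p x))^2) (Ioo 0 t) := by
    have heq : (fun x => p x * (Real.log (p x))^2)
        = fun x => (2*(Real.sqrt (p x) * Real.log (Real.sqrt (p x))))^2 := by
      funext x
      rw [hΦ2eq (p x) (div_nonneg (hfnn x) hFpos.le)]
    rw [heq]
    apply Integrable.mono' (g := fun _ => D₂) (integrableOn_const hIooFin.ne)
      (hΦ2cont.comp_aestronglyMeasurable hpmeas)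
    filter_upwards [ae_restrict_mem measurableSet_Ioo] with x hx
    exact hD₂ _ (hpC x hx)
  -- total mass one
  have hP : ∫ x in Ioo 0 t, p x = 1 := by
    rw [← integral_Ioc_eq_integral_Ioo]
    simp only [hpdef]
    rw [MeasureTheory.integral_div, ← intervalIntegral.integral_of_le ht.le, ← hFt]
    exact div_self hFpos.ne'
  -- expand E
  have hexpand : ∫ x in Ioo 0 t, p x * ((Real.log (p x) - c)^2 - 1)
      = (∫ x in Ioo 0 t, p x * (Real.log (p x))^2)
        - 2*c*(∫ x in Ioo 0 t, p x * Real.log (p x)) + (c^2 - 1) := by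
    have hfun : (fun x => p x * ((Real.log (p x) - c)^2 - 1))
        = fun x => (p x * (Real.log (p x))^2 - (2*c) * (p x * Real.log (p x)))
            + (c^2 - 1) * p x := by
      funext x; ring
    have hAint : Integrable
        (fun x => p x * (Real.log (p x))^2 - (2*c) * (p x * Real.log (p x)))
        (volume.restrict (Ioo 0 t)) := by
      exact h2_int.sub (h1_int.const_mul (2*c))
    have hBint : Integrable (fun x => (c^2 - 1) * p x) (volume.restrict (Ioo 0 t)) :=
      hp_int.const_mul (c^2 - 1)
    rw [hfun, integral_add hAint hBint,
      integral_sub h2_int (h1_int.const_mul (2*c)),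
      MeasureTheory.integral_const_mul, MeasureTheory.integral_const_mul, hP]
    ring
  -- convert goal
  have hg2 : (∫ x in (0:ℝ)..t, f x / Ft * (Real.log (f x / Ft))^2)
      = ∫ x in Ioo 0 t, p x * (Real.log (p x))^2 := by
    rw [intervalIntegral.integral_of_le ht.le, integral_Ioc_eq_integral_Ioo]
  have hg1 : (∫ x in (0:ℝ)..t, f x / Ft * Real.log (f x / Ft))
      = ∫ x in Ioo 0 t, p x * Real.log (p x) := by
    rw [intervalIntegral.integral_of_le ht.le, integral_Ioc_eq_integral_Ioo]
  rw [hg1, hg2]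
  have hfinal : (∫ x in Ioo 0 t, p x * (Real.log (p x))^2)
      - 2*c*(∫ x in Ioo 0 t, p x * Real.log (p x)) + (c^2 - 1) ≤ 0 := by
    rw [← hexpand]; exact hE
  nlinarith [sq_nonneg ((∫ x in Ioo 0 t, p x * Real.log (p x)) - c)]
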